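/- arXiv:1808.10320 — 3 statements merged into one kernel-verified Lean document; each statement's English description precedes it below -/
import Mathlib

section
/- Let T be a theory. Then there is a basic theory T_b such that for every graded implication Φ: T ⊢ Φ in LAE if and only if T_b ⊢ Φ in LAE. -/
/-- Boolean (propositional) formulas over countably many variables. -/
inductive BForm : Type
  | var : ℕ → BForm
  | bot : BForm
  | top : BForm
  | and : BForm → BForm → BForm
  | or : BForm → BForm → BForm
  | not : BForm → BForm

/-- Classical truth-value evaluation of a Boolean formula. -/
def BForm.eval (v : ℕ → Bool) : BForm → Bool
  | .var n => v n
  | .bot => false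
  | .top => true
  | .and a b => a.eval v && b.eval v
  | .or a b => a.eval v || b.eval v
  | .not a => !(a.eval v)

/-- The abbreviation `a → b`. -/
def BForm.imp (a b : BForm) : BForm := .or (.not a) b

/-- A formula is a CPL tautology if it is true under every assignment. -/
def BForm.Taut (a : BForm) : Prop := ∀ v : ℕ → Bool, a.eval v = true

/-- A graded implication `α ⟹_d β` with degree `d ∈ ℝ⁺ = [0,∞)`. -/
structure GradedImp : Type where
  lhs : BForm
  deg : NNReal
  rhs : BForm

/-- Derivability in the calculus LAE from a theory `T`. -/
inductive Derives (T : Set GradedImp) : GradedImp → Prop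
  | ax {Φ : GradedImp} : Φ ∈ T → Derives T Φ
  | r1 (α β : BForm) : (α.imp β).Taut → Derives T ⟨α, 0, β⟩
  | r2 {α β : BForm} (γ : BForm) :
      Derives T ⟨α, 0, β⟩ → Derives T ⟨α.and γ, 0, β.and γ⟩
  | r3 {α β : BForm} {c : NNReal} (d : NNReal) :
      c ≤ d → Derives T ⟨α, c, β⟩ → Derives T ⟨α, d, β⟩
  | r4 {α : BForm} {c : NNReal} :
      Derives T ⟨α, c, .bot⟩ → Derives T ⟨α, 0, .bot⟩
  | r5 {α β γ : BForm} {c : NNReal} :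
      Derives T ⟨α, c, γ⟩ → Derives T ⟨β, c, γ⟩ → Derives T ⟨α.or β, c, γ⟩
  | r6 {α β γ : BForm} {c d : NNReal} :
      Derives T ⟨α, c, β⟩ → Derives T ⟨β, d, γ⟩ → Derives T ⟨α, c + d, γ⟩

/-- A literal: a variable index together with a polarity (`true` = positive). -/
abbrev Lit : Type := ℕ × Bool

/-- The formula corresponding to a literal. -/
def litForm : Lit → BForm
  | (n, true) => .var n
  | (n, false) => .not (.var n)

/-- The conjunction `λ₁ ∧ … ∧ λₙ` of a nonempty list of literals. -/
def conjLits : Lit → List Lit → BForm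
  | l, [] => litForm l
  | l, m :: rest => (litForm l).and (conjLits m rest)

/-- The disjunction of a list of formulas, the empty disjunction being `⊥`. -/
def disjForms : List BForm → BForm
  | [] => .bot
  | [a] => a
  | a :: b :: rest => a.or (disjForms (b :: rest))

/-- A list of literals is consistent if it contains no variable together with its negation. -/
def ConsistentList (l : List Lit) : Prop :=
  ∀ n : ℕ, ¬((n, true) ∈ l ∧ (n, false) ∈ l)

/-- A basic implication: `λ₁ ∧ … ∧ λₙ ⟹_d ⋁ᵢ ⋀ⱼ μᵢⱼ` with `n ≥ 1`, `l ≥ 0`,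
each `kᵢ ≥ 1`, and all clauses consistent. -/
def IsBasic (Φ : GradedImp) : Prop :=
  ∃ (lam : Lit) (lams : List Lit) (cls : List (Lit × List Lit)),
    ConsistentList (lam :: lams) ∧
    (∀ c ∈ cls, ConsistentList (c.1 :: c.2)) ∧
    Φ.lhs = conjLits lam lams ∧
    Φ.rhs = disjForms (cls.map fun c => conjLits c.1 c.2)

/- auxiliary development -/
def varsList : BForm → List ℕ
  | .var n => [n]
  | .bot => []
  | .top => []
  | .and a b => varsList a ++ varsList b
  | .or a b => varsList a ++ varsList b
  | .not a => varsList a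

lemma eval_congr (a : BForm) {v w : ℕ → Bool} (h : ∀ n ∈ varsList a, v n = w n) :
    a.eval v = a.eval w := by
  induction a with
  | var n => exact h n (by simp [varsList])
  | bot => rfl
  | top => rfl
  | and a b ih1 ih2 =>
      simp only [BForm.eval]
      rw [ih1 fun n hn => h n (by simp [varsList, hn]),
          ih2 fun n hn => h n (by simp [varsList, hn])]
  | or a b ih1 ih2 =>
      simp only [BForm.eval]
      rw [ih1 fun n hn => h n (by simp [varsList, hn]),
          ih2 fun n hn => h n (by simp [varsList, hn])]
  | not a ih =>
      simp only [BForm.eval]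
      rw [ih fun n hn => h n (by simp [varsList, hn])]

def allAssign : List ℕ → List (ℕ → Bool)
  | [] => [fun _ => false]
  | n :: rest => (allAssign rest).flatMap fun v =>
      [Function.update v n false, Function.update v n true]

lemma allAssign_spec : ∀ (L : List ℕ) (v : ℕ → Bool),
    ∃ w ∈ allAssign L, ∀ n ∈ L, w n = v n
  | [], v => ⟨fun _ => false, by simp [allAssign], by simp⟩
  | n :: rest, v => by
    obtain ⟨w, hw, hag⟩ := allAssign_spec rest v
    refine ⟨Function.update w n (v n), ?_, ?_⟩
    · rw [allAssign]
      exact List.mem_flatMap.mpr ⟨w, hw, by cases h : v n <;> simp [h]⟩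
    · intro m hm
      by_cases hmn : m = n
      · subst hmn; simp
      · rw [Function.update_of_ne hmn]
        rcases List.mem_cons.mp hm with rfl | hm'
        · exact absurd rfl hmn
        · exact hag m hm'

lemma eval_litForm (p : Lit) (v : ℕ → Bool) :
    (litForm p).eval v = true ↔ v p.1 = p.2 := by
  rcases p with ⟨n, b⟩; cases b <;> simp [litForm, BForm.eval]

lemma eval_conjLits (v : ℕ → Bool) : ∀ (l : Lit) (ls : List Lit),
    (conjLits l ls).eval v = true ↔ ∀ p ∈ l :: ls, v p.1 = p.2
  | l, [] => by simp [conjLits, eval_litForm]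
  | l, m :: rest => by
    simp [conjLits, BForm.eval, eval_litForm, eval_conjLits v m rest]

lemma eval_disjForms (v : ℕ → Bool) : ∀ (xs : List BForm),
    (disjForms xs).eval v = true ↔ ∃ a ∈ xs, a.eval v = true
  | [] => by simp [disjForms, BForm.eval]
  | [a] => by simp [disjForms]
  | a :: b :: rest => by
    simp [disjForms, BForm.eval, eval_disjForms v (b :: rest)]

lemma taut_imp {a b : BForm} (h : ∀ v, a.eval v = true → b.eval v = true) :
    (a.imp b).Taut := by
  intro v
  simp only [BForm.imp, BForm.eval, Bool.or_eq_true, Bool.not_eq_true']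
  cases ha : a.eval v
  · exact Or.inl rfl
  · exact Or.inr (h v ha)

def varL (a : BForm) : List ℕ := 0 :: (varsList a).dedup

def clauseTail (a : BForm) (w : ℕ → Bool) : List Lit :=
  (varsList a).dedup.map fun n => (n, w n)

def conjOf (a : BForm) (w : ℕ → Bool) : BForm := conjLits (0, w 0) (clauseTail a w)

def satList (a : BForm) : List (ℕ → Bool) :=
  (allAssign (varL a)).filter fun w => a.eval w

def dnf (a : BForm) : BForm := disjForms ((satList a).map (conjOf a))

lemma clause_eq (a : BForm) (w : ℕ → Bool) :
    (0, w 0) :: clauseTail a w = (varL a).map fun n => (n, w n) := rfl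

lemma mem_varL_of_mem_vars {a : BForm} {n : ℕ} (h : n ∈ varsList a) : n ∈ varL a := by
  simp [varL, List.mem_dedup, h]

lemma eval_conjOf (a : BForm) (w v : ℕ → Bool) :
    (conjOf a w).eval v = true ↔ ∀ n ∈ varL a, v n = w n := by
  rw [conjOf, eval_conjLits, clause_eq]
  constructor
  · intro h n hn
    exact h (n, w n) (List.mem_map_of_mem (f := fun n => (n, w n)) hn)
  · intro h p hp
    obtain ⟨n, hn, rfl⟩ := List.mem_map.mp hp
    exact h n hn

lemma consistent_clause (w : ℕ → Bool) (L : List ℕ) :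
    ConsistentList (L.map fun n => (n, w n)) := by
  rintro n ⟨h1, h2⟩
  simp only [List.mem_map, Prod.mk.injEq] at h1 h2
  obtain ⟨m, -, rfl, hw⟩ := h1
  obtain ⟨m', -, rfl, hw'⟩ := h2
  rw [hw] at hw'
  exact Bool.noConfusion hw'

lemma mem_satList {a : BForm} {w : ℕ → Bool} (h : w ∈ satList a) :
    w ∈ allAssign (varL a) ∧ a.eval w = true := by
  simpa using List.mem_filter.mp h

lemma conjOf_imp_taut {a : BForm} {w : ℕ → Bool} (hw : w ∈ satList a) :
    ((conjOf a w).imp a).Taut := by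
  apply taut_imp; intro v hv
  rw [eval_conjOf] at hv
  have : a.eval v = a.eval w :=
    eval_congr a fun n hn => hv n (mem_varL_of_mem_vars hn)
  rw [this]
  exact (mem_satList hw).2

lemma imp_dnf_taut (a : BForm) : (a.imp (dnf a)).Taut := by
  apply taut_imp; intro v hv
  obtain ⟨w, hw, hagree⟩ := allAssign_spec (varL a) v
  have haw : a.eval w = true := by
    rw [eval_congr a fun n hn => hagree n (mem_varL_of_mem_vars hn)]
    exact hv
  have hws : w ∈ satList a := List.mem_filter.mpr ⟨hw, by simpa using haw⟩
  rw [dnf, eval_disjForms]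
  refine ⟨conjOf a w, List.mem_map_of_mem (f := conjOf a) hws, ?_⟩
  rw [eval_conjOf]
  exact fun n hn => (hagree n hn).symm

lemma dnf_imp_taut (a : BForm) : ((dnf a).imp a).Taut := by
  apply taut_imp; intro v hv
  rw [dnf, eval_disjForms] at hv
  obtain ⟨x, hx, hxv⟩ := hv
  obtain ⟨w, hw, rfl⟩ := List.mem_map.mp hx
  have := conjOf_imp_taut hw v
  simp only [BForm.imp, BForm.eval, Bool.or_eq_true, Bool.not_eq_true'] at this
  rcases this with h | h
  · rw [hxv] at h; exact Bool.noConfusion h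
  · exact h

lemma unsat_taut {a : BForm} (h : satList a = []) (b : BForm) : (a.imp b).Taut := by
  apply taut_imp; intro v hv
  obtain ⟨w, hw, hagree⟩ := allAssign_spec (varL a) v
  have haw : a.eval w = true := by
    rw [eval_congr a fun n hn => hagree n (mem_varL_of_mem_vars hn)]
    exact hv
  have hws : w ∈ satList a := List.mem_filter.mpr ⟨hw, by simpa using haw⟩
  rw [h] at hws
  exact absurd hws List.not_mem_nil

lemma Derives.cut {S S' : Set GradedImp} (hs : ∀ Ψ ∈ S', Derives S Ψ)
    {Φ : GradedImp} (h : Derives S' Φ) : Derives S Φ := by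
  induction h with
  | ax h => exact hs _ h
  | r1 α β h => exact .r1 α β h
  | r2 γ _ ih => exact .r2 γ ih
  | r3 d hcd _ ih => exact .r3 d hcd ih
  | r4 _ ih => exact .r4 ih
  | r5 _ _ ih1 ih2 => exact .r5 ih1 ih2
  | r6 _ _ ih1 ih2 => exact .r6 ih1 ih2

lemma Derives.chain {S : Set GradedImp} {α α' β' β : BForm} {d : NNReal}
    (h1 : Derives S ⟨α, 0, α'⟩) (h2 : Derives S ⟨α', d, β'⟩)
    (h3 : Derives S ⟨β', 0, β⟩) : Derives S ⟨α, d, β⟩ := by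
  simpa using (h1.r6 h2).r6 h3

lemma derive_disj {S : Set GradedImp} {γ : BForm} {d : NNReal} :
    ∀ (xs : List BForm), xs ≠ [] →
    (∀ a ∈ xs, Derives S ⟨a, d, γ⟩) → Derives S ⟨disjForms xs, d, γ⟩
  | [], h, _ => absurd rfl h
  | [x], _, h => by simpa [disjForms] using h x (by simp)
  | x :: y :: ys, _, h => by
      show Derives S ⟨(x.or (disjForms (y :: ys))), d, γ⟩
      exact .r5 (h x (by simp))
        (derive_disj (y :: ys) (by simp) fun a ha => h a (List.mem_cons_of_mem _ ha))

theorem exists_basic_theory (T : Set GradedImp) :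
    ∃ Tb : Set GradedImp, (∀ Φ ∈ Tb, IsBasic Φ) ∧
      ∀ Φ : GradedImp, Derives T Φ ↔ Derives Tb Φ := by
  classical
  set Tb : Set GradedImp :=
    {Ψ | ∃ α d β, GradedImp.mk α d β ∈ T ∧
      ∃ w ∈ satList α, Ψ = ⟨conjOf α w, d, dnf β⟩} with hTbdef
  have hbasic : ∀ Ψ ∈ Tb, IsBasic Ψ := by
    rintro Ψ ⟨α, d, β, hT, w, hw, rfl⟩
    refine ⟨(0, w 0), clauseTail α w,
      (satList β).map (fun w' => ((0, w' 0), clauseTail β w')), ?_, ?_, rfl, ?_⟩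
    · rw [clause_eq]; exact consistent_clause w _
    · rintro c hc
      obtain ⟨w', _, rfl⟩ := List.mem_map.mp hc
      show ConsistentList ((0, w' 0) :: clauseTail β w')
      rw [clause_eq]; exact consistent_clause w' _
    · show dnf β = _
      rw [List.map_map]
      rfl
  have h1 : ∀ Ψ ∈ Tb, Derives T Ψ := by
    rintro Ψ ⟨α, d, β, hT, w, hw, rfl⟩
    exact Derives.chain (.r1 _ _ (conjOf_imp_taut hw)) (.ax hT)
      (.r1 _ _ (imp_dnf_taut β))
  have h2 : ∀ Φ ∈ T, Derives Tb Φ := by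
    intro Φ hΦ
    obtain ⟨α, d, β⟩ := Φ
    rcases hsat : satList α with _ | ⟨w, ws⟩
    · exact .r3 d zero_le (.r1 _ _ (unsat_taut hsat β))
    · have hd : Derives Tb ⟨dnf α, d, dnf β⟩ := by
        rw [dnf]
        apply derive_disj _ (by simp [hsat])
        intro a ha
        obtain ⟨w', hw', rfl⟩ := List.mem_map.mp ha
        exact .ax ⟨α, d, β, hΦ, w', hw', rfl⟩
      exact Derives.chain (.r1 _ _ (imp_dnf_taut α)) hd
        (.r1 _ _ (dnf_imp_taut β))
  exact ⟨Tb, hbasic, fun Φ => ⟨fun h => Derives.cut h2 h, fun h => Derives.cut h1 h⟩⟩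
end

section
/- Let T be a finite theory and let ζ, η be Boolean formulas such that T ⊢ ζ ⟹_s η in LAE for some s ∈ ℝ⁺. Then there is an r ∈ ℝ⁺ such that: (i) T ⊢ ζ ⟹_r η, and for every t ∈ ℝ⁺ with T ⊢ ζ ⟹_t η one has r ≤ t; and (ii) r is a finite sum (possibly empty, i.e., 0, and possibly with repetitions) of degrees of graded implications contained in T. -/
/-! ### Auxiliary lemmas -/

lemma sum_filter_pos (l : List NNReal) : (l.filter (fun x => 0 < x)).sum = l.sum := by
  induction l with
  | nil => simp
  | cons a l ih =>
    rcases eq_or_lt_of_le (zero_le : 0 ≤ a) with h | h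
    · rw [List.filter_cons, if_neg (by simp [← h]), ih, List.sum_cons, ← h, zero_add]
    · rw [List.filter_cons, if_pos (by simp [h]), List.sum_cons, List.sum_cons, ih]

lemma len_smul_le_sum (l : List NNReal) (n : NNReal) (h : ∀ x ∈ l, n ≤ x) :
    (l.length : NNReal) * n ≤ l.sum := by
  induction l with
  | nil => simp
  | cons a l ih =>
    simp only [List.length_cons, List.sum_cons, Nat.cast_add, Nat.cast_one]
    calc ((l.length : NNReal) + 1) * n = n + l.length * n := by ring
    _ ≤ a + l.sum := add_le_add (h a (by simp)) (ih fun x hx => h x (by simp [hx]))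

/-- Sums of lists over a finite set, with bounded length, form a finite set. -/
lemma sums_len_finite (D : Set NNReal) (hD : D.Finite) (n : ℕ) :
    {t : NNReal | ∃ l : List NNReal, (∀ x ∈ l, x ∈ D) ∧ l.length ≤ n ∧ t = l.sum}.Finite := by
  induction n with
  | zero =>
    apply Set.Finite.subset (Set.finite_singleton 0)
    rintro t ⟨l, -, hlen, rfl⟩
    simp [List.length_eq_zero_iff.mp (Nat.le_zero.mp hlen)]
  | succ n ih =>
    apply Set.Finite.subset (ih.union ((hD.biUnion (fun d _ => ih.image (fun t => d + t)))))
    rintro t ⟨l, hmem, hlen, rfl⟩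
    match l with
    | [] => exact Or.inl ⟨[], by simp⟩
    | a :: l =>
      right
      refine Set.mem_biUnion (hmem a (by simp)) ⟨l.sum, ⟨l, fun x hx => hmem x (by simp [hx]),
        by simpa using hlen, rfl⟩, by simp⟩

/-- Bounded sums of lists over a finite set of nonnegative reals form a finite set. -/
lemma sums_le_finite (D : Set NNReal) (hD : D.Finite) (B : NNReal) :
    {t : NNReal | (∃ l : List NNReal, (∀ x ∈ l, x ∈ D) ∧ t = l.sum) ∧ t ≤ B}.Finite := by
  -- a positive lower bound for the positive elements of D
  obtain ⟨ε, hε0, hεle⟩ : ∃ ε : NNReal, 0 < ε ∧ ∀ d ∈ D, 0 < d → ε ≤ d := by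
    have hDpos : {d ∈ D | 0 < d}.Finite := hD.subset (Set.sep_subset _ _)
    rcases eq_or_ne hDpos.toFinset ∅ with hemp | hne
    · exact ⟨1, one_pos, fun d hd hdpos => by
        exact absurd (hDpos.mem_toFinset.mpr ⟨hd, hdpos⟩) (by simp [hemp])⟩
    · refine ⟨hDpos.toFinset.min' (Finset.nonempty_of_ne_empty hne), ?_, ?_⟩
      · have := hDpos.mem_toFinset.mp (hDpos.toFinset.min'_mem (Finset.nonempty_of_ne_empty hne))
        exact this.2
      · exact fun d hd hdpos => Finset.min'_le _ _ (hDpos.mem_toFinset.mpr ⟨hd, hdpos⟩)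
  obtain ⟨N, hN⟩ := exists_nat_gt (B / ε)
  have hBN : B < N * ε := by
    calc B = B / ε * ε := (div_mul_cancel₀ B hε0.ne').symm
    _ < N * ε := by exact mul_lt_mul_of_pos_right hN hε0
  apply Set.Finite.subset (sums_len_finite D hD N)
  rintro t ⟨⟨l, hmem, rfl⟩, hle⟩
  refine ⟨l.filter (fun x => 0 < x), fun x hx => hmem x (List.mem_of_mem_filter hx), ?_,
    (sum_filter_pos l).symm⟩
  by_contra hlen
  push_neg at hlen
  have h1 : (N : NNReal) * ε ≤ ((l.filter (fun x => 0 < x)).length : NNReal) * ε :=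
    mul_le_mul_of_nonneg_right (by exact_mod_cast hlen.le) zero_le
  have h2 : ((l.filter (fun x => 0 < x)).length : NNReal) * ε ≤ (l.filter (fun x => 0 < x)).sum :=
    len_smul_le_sum _ _ (fun x hx => hεle x (hmem x (List.mem_of_mem_filter hx))
      (by simpa using (List.mem_filter.mp hx).2))
  rw [sum_filter_pos] at h2
  exact absurd ((h1.trans h2).trans hle) (not_le.mpr hBN)

/-- Every derivable graded implication can be derived at a degree below the original one
which is a finite sum of degrees of axioms in `T`. -/
lemma Derives.reduce {T : Set GradedImp} {Φ : GradedImp} (h : Derives T Φ) :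
    ∃ c' : NNReal, c' ≤ Φ.deg ∧ Derives T ⟨Φ.lhs, c', Φ.rhs⟩ ∧
      ∃ l : List NNReal, (∀ x ∈ l, ∃ Ψ ∈ T, Ψ.deg = x) ∧ c' = l.sum := by
  induction h with
  | @ax Φ hΦ =>
    exact ⟨Φ.deg, le_rfl, Derives.ax hΦ, [Φ.deg],
      by rintro x hx; simp only [List.mem_singleton] at hx; exact ⟨Φ, hΦ, hx.symm⟩, by simp⟩
  | r1 α β ht => exact ⟨0, le_rfl, Derives.r1 α β ht, [], by simp, by simp⟩
  | r2 γ hprem ih => exact ⟨0, le_rfl, Derives.r2 γ hprem, [], by simp, by simp⟩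
  | r3 d hcd hprem ih =>
    obtain ⟨c', hc', hder, l, hl, rfl⟩ := ih
    exact ⟨l.sum, hc'.trans hcd, hder, l, hl, rfl⟩
  | r4 hprem ih => exact ⟨0, le_rfl, Derives.r4 hprem, [], by simp, by simp⟩
  | r5 h1 h2 ih1 ih2 =>
    obtain ⟨c₁, hc₁, hd₁, l₁, hl₁, rfl⟩ := ih1
    obtain ⟨c₂, hc₂, hd₂, l₂, hl₂, rfl⟩ := ih2
    rcases le_total l₁.sum l₂.sum with hle | hle
    · exact ⟨l₂.sum, hc₂, Derives.r5 (Derives.r3 _ hle hd₁) hd₂, l₂, hl₂, rfl⟩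
    · exact ⟨l₁.sum, hc₁, Derives.r5 hd₁ (Derives.r3 _ hle hd₂), l₁, hl₁, rfl⟩
  | r6 h1 h2 ih1 ih2 =>
    obtain ⟨c₁, hc₁, hd₁, l₁, hl₁, rfl⟩ := ih1
    obtain ⟨c₂, hc₂, hd₂, l₂, hl₂, rfl⟩ := ih2
    refine ⟨l₁.sum + l₂.sum, add_le_add hc₁ hc₂, Derives.r6 hd₁ hd₂, l₁ ++ l₂, ?_, by simp⟩
    intro x hx
    rcases List.mem_append.mp hx with hx | hx
    · exact hl₁ x hx
    · exact hl₂ x hx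

theorem exists_smallest_degree (T : Set GradedImp) (hT : T.Finite)
    (ζ η : BForm) (s : NNReal) (h : Derives T ⟨ζ, s, η⟩) :
    ∃ r : NNReal,
      Derives T ⟨ζ, r, η⟩ ∧
      (∀ t : NNReal, Derives T ⟨ζ, t, η⟩ → r ≤ t) ∧
      (∃ l : List NNReal, (∀ x ∈ l, ∃ Φ ∈ T, Φ.deg = x) ∧ r = l.sum) := by
  obtain ⟨r₀, hr₀s, hder₀, l₀, hl₀, hsum₀⟩ := h.reduce
  -- the set of candidate degrees
  set W : Set NNReal := {t | Derives T ⟨ζ, t, η⟩ ∧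
    (∃ l : List NNReal, (∀ x ∈ l, ∃ Φ ∈ T, Φ.deg = x) ∧ t = l.sum) ∧ t ≤ r₀} with hW
  have hWfin : W.Finite := by
    apply Set.Finite.subset (sums_le_finite (GradedImp.deg '' T) (hT.image _) r₀)
    rintro t ⟨-, ⟨l, hl, rfl⟩, hle⟩
    exact ⟨⟨l, fun x hx => by obtain ⟨Φ, hΦ, hΦx⟩ := hl x hx; exact ⟨Φ, hΦ, hΦx⟩, rfl⟩, hle⟩
  have hr₀W : r₀ ∈ W := ⟨hder₀, ⟨l₀, hl₀, hsum₀⟩, le_rfl⟩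
  have hne : hWfin.toFinset.Nonempty := ⟨r₀, hWfin.mem_toFinset.mpr hr₀W⟩
  set r := hWfin.toFinset.min' hne with hrdef
  have hrW : r ∈ W := hWfin.mem_toFinset.mp (hWfin.toFinset.min'_mem hne)
  refine ⟨r, hrW.1, ?_, hrW.2.1⟩
  intro t ht
  obtain ⟨t', ht'le, ht'der, l', hl', hsum'⟩ := ht.reduce
  rcases le_total t' r₀ with hcase | hcase
  · exact (hWfin.toFinset.min'_le t' (hWfin.mem_toFinset.mpr
      ⟨ht'der, ⟨l', hl', hsum'⟩, hcase⟩)).trans ht'le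
  · exact ((hWfin.toFinset.min'_le r₀ (hWfin.mem_toFinset.mpr hr₀W)).trans hcase).trans ht'le
end

section
/- Completeness with min-space countermodels: let T be a finite theory and Φ a graded implication. If T does not prove Φ in the calculus LAE, then there exist a model for LAEq whose underlying quasimetric space (W,q) is a min-space and an evaluation v into this model such that v satisfies every element of T but does not satisfy Φ. -/
open scoped ENNReal

/-- A quasimetric on `W`: `q v w = 0` iff `v = w`, and the triangle inequality holds. -/
structure Quasimetric (W : Type*) where
  q : W → W → ℝ≥0∞
  eq_zero_iff : ∀ v w, q v w = 0 ↔ v = w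
  triangle : ∀ v w x, q v x ≤ q v w + q w x

/-- The distance of a point from a set: `inf_{b ∈ B} q a b` (equal to `∞` for `B = ∅`). -/
noncomputable def Quasimetric.distSet {W : Type*} (Q : Quasimetric W) (a : W) (B : Set W) : ℝ≥0∞ :=
  ⨅ b ∈ B, Q.q a b

/-- The `d`-neighbourhood of `B`. -/
def Quasimetric.nbhd {W : Type*} (Q : Quasimetric W) (d : ℝ≥0∞) (B : Set W) : Set W :=
  { a | Q.distSet a B ≤ d }

/-- The Hausdorff quasidistance: `sup_{a ∈ A} q(a, B)` (equal to `0` for `A = ∅`). -/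
noncomputable def Quasimetric.hdist {W : Type*} (Q : Quasimetric W) (A B : Set W) : ℝ≥0∞ :=
  ⨆ a ∈ A, Q.distSet a B

/-- A min-space: the distance of a point from a nonempty set is attained. -/
def Quasimetric.IsMinSpace {W : Type*} (Q : Quasimetric W) : Prop :=
  ∀ (a : W) (B : Set W), B.Nonempty → ∃ b ∈ B, Q.distSet a B = Q.q a b

/-- A model for LAEq: a Boolean algebra of subsets of a quasimetric space,
closed under the neighbourhood operators `U_d` for `d ∈ ℝ⁺`. -/
structure LAEModel (W : Type) where
  Q : Quasimetric W
  carrier : Set (Set W)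
  empty_mem : ∅ ∈ carrier
  univ_mem : Set.univ ∈ carrier
  inter_mem : ∀ A ∈ carrier, ∀ B ∈ carrier, A ∩ B ∈ carrier
  union_mem : ∀ A ∈ carrier, ∀ B ∈ carrier, A ∪ B ∈ carrier
  compl_mem : ∀ A ∈ carrier, Aᶜ ∈ carrier
  nbhd_mem : ∀ A ∈ carrier, ∀ d : NNReal, Q.nbhd (d : ℝ≥0∞) A ∈ carrier

/-- An evaluation of the Boolean formulas in a model, in the sense of
classical propositional logic. -/
structure Evaluation {W : Type} (M : LAEModel W) where
  v : BForm → Set W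
  mem_carrier : ∀ α : BForm, v α ∈ M.carrier
  map_and : ∀ α β : BForm, v (α.and β) = v α ∩ v β
  map_or : ∀ α β : BForm, v (α.or β) = v α ∪ v β
  map_not : ∀ α : BForm, v (α.not) = (v α)ᶜ
  map_bot : v .bot = ∅
  map_top : v .top = Set.univ

/-- An evaluation satisfies `α ⟹_d β` if `v(α) ⊆ U_d(v(β))`. -/
def Satisfies {W : Type} {M : LAEModel W} (e : Evaluation M) (Φ : GradedImp) : Prop :=
  e.v Φ.lhs ⊆ M.Q.nbhd (Φ.deg : ℝ≥0∞) (e.v Φ.rhs)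

/-- Semantic entailment in LAEq: every evaluation into any model satisfying
all elements of `T` also satisfies `Φ`. -/
def SemEntails (T : Set GradedImp) (Φ : GradedImp) : Prop :=
  ∀ (W : Type) (_ : Nonempty W) (M : LAEModel W) (e : Evaluation M),
    (∀ Ψ ∈ T, Satisfies e Ψ) → Satisfies e Φ

namespace LAECompleteness

/-- The variables occurring in a formula. -/
def fvars : BForm → Finset ℕ
  | .var n => {n}
  | .bot => ∅
  | .top => ∅
  | .and a b => fvars a ∪ fvars b
  | .or a b => fvars a ∪ fvars b
  | .not a => fvars a

lemma eval_congr : ∀ (α : BForm) {f g : ℕ → Bool}, (∀ n ∈ fvars α, f n = g n) →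
    α.eval f = α.eval g
  | .var n, f, g, h => h n (by simp [fvars])
  | .bot, _, _, _ => rfl
  | .top, _, _, _ => rfl
  | .and a b, f, g, h => by
      simp only [BForm.eval]
      rw [eval_congr a (fun n hn => h n (by simp [fvars, hn])),
        eval_congr b (fun n hn => h n (by simp [fvars, hn]))]
  | .or a b, f, g, h => by
      simp only [BForm.eval]
      rw [eval_congr a (fun n hn => h n (by simp [fvars, hn])),
        eval_congr b (fun n hn => h n (by simp [fvars, hn]))]
  | .not a, f, g, h => by
      simp only [BForm.eval]
      rw [eval_congr a h]

lemma taut_of {α β : BForm} (h : ∀ f, α.eval f = true → β.eval f = true) :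
    (α.imp β).Taut := by
  intro f
  simp only [BForm.imp, BForm.eval]
  cases hα : α.eval f with
  | false => simp
  | true => simp [h f hα]

variable {T : Set GradedImp}

lemma dtaut {α β : BForm} (c : NNReal) (h : ∀ f, α.eval f = true → β.eval f = true) :
    Derives T ⟨α, c, β⟩ :=
  Derives.r3 c zero_le (Derives.r1 α β (taut_of h))

lemma chain0l {α β γ : BForm} {c : NNReal} (h1 : Derives T ⟨α, 0, β⟩)
    (h2 : Derives T ⟨β, c, γ⟩) : Derives T ⟨α, c, γ⟩ := by
  simpa using Derives.r6 h1 h2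

lemma chain0r {α β γ : BForm} {c : NNReal} (h1 : Derives T ⟨α, c, β⟩)
    (h2 : Derives T ⟨β, 0, γ⟩) : Derives T ⟨α, c, γ⟩ := by
  simpa using Derives.r6 h1 h2

def bigOr : List BForm → BForm
  | [] => .bot
  | φ :: l => .or φ (bigOr l)

lemma eval_bigOr (f : ℕ → Bool) : ∀ l : List BForm,
    ((bigOr l).eval f = true ↔ ∃ φ ∈ l, φ.eval f = true)
  | [] => by simp [bigOr, BForm.eval]
  | φ :: l => by simp [bigOr, BForm.eval, eval_bigOr f l]

lemma derives_bigOr {c : NNReal} {δ : BForm} :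
    ∀ l : List BForm, (∀ φ ∈ l, Derives T ⟨φ, c, δ⟩) → Derives T ⟨bigOr l, c, δ⟩
  | [], _ => dtaut c (by intro f hf; simp [bigOr, BForm.eval] at hf)
  | φ :: l, h =>
      Derives.r5 (h φ (by simp)) (derives_bigOr l fun ψ hψ => h ψ (by simp [hψ]))

lemma derives_and_not_bot {χ β : BForm} (h1 : Derives T ⟨χ, 0, β⟩)
    (h2 : Derives T ⟨χ, 0, β.not⟩) : Derives T ⟨χ, 0, .bot⟩ := by
  have t1 : Derives T ⟨χ, 0, χ.and χ⟩ := dtaut 0 (by intro f hf; simp [BForm.eval, hf])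
  have a1 : Derives T ⟨χ.and χ, 0, β.and χ⟩ := Derives.r2 χ h1
  have t2 : Derives T ⟨β.and χ, 0, χ.and β⟩ := dtaut 0 (by
    intro f hf
    simp only [BForm.eval, Bool.and_eq_true] at hf ⊢
    exact ⟨hf.2, hf.1⟩)
  have a2 : Derives T ⟨χ.and β, 0, (β.not).and β⟩ := Derives.r2 β h2
  have t3 : Derives T ⟨(β.not).and β, 0, BForm.bot⟩ := dtaut 0 (by
    intro f hf
    simp [BForm.eval] at hf)
  exact chain0l t1 (chain0l a1 (chain0l t2 (chain0l a2 t3)))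

variable (V : Finset ℕ)

abbrev Atom : Type := {n // n ∈ V} → Bool

def extA (a : Atom V) : ℕ → Bool := fun n => if h : n ∈ V then a ⟨n, h⟩ else false

def lit (n : ℕ) (b : Bool) : BForm := if b then .var n else .not (.var n)

lemma eval_lit {f : ℕ → Bool} {n : ℕ} {b : Bool} : (lit n b).eval f = true ↔ f n = b := by
  cases b <;> simp [lit, BForm.eval]

def bigAnd : List BForm → BForm
  | [] => .top
  | φ :: l => .and φ (bigAnd l)

lemma eval_bigAnd (f : ℕ → Bool) : ∀ l : List BForm,
    ((bigAnd l).eval f = true ↔ ∀ φ ∈ l, φ.eval f = true)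
  | [] => by simp [bigAnd, BForm.eval]
  | φ :: l => by simp [bigAnd, BForm.eval, eval_bigAnd f l]

noncomputable def chi (a : Atom V) : BForm := bigAnd (V.toList.map fun n => lit n (extA V a n))

lemma eval_chi {a : Atom V} {f : ℕ → Bool} :
    (chi V a).eval f = true ↔ ∀ n ∈ V, f n = extA V a n := by
  simp only [chi, eval_bigAnd, List.mem_map]
  constructor
  · intro h n hn
    exact eval_lit.mp (h _ ⟨n, by simpa using hn, rfl⟩)
  · rintro h φ ⟨n, hn, rfl⟩
    exact eval_lit.mpr (h n (by simpa using hn))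

def restrict (f : ℕ → Bool) : Atom V := fun n => f n.1

lemma extA_restrict {f : ℕ → Bool} {n : ℕ} (hn : n ∈ V) :
    extA V (restrict V f) n = f n := dif_pos hn

lemma chi_imp {a : Atom V} {α : BForm} (hv : fvars α ⊆ V)
    (ha : α.eval (extA V a) = true) :
    ∀ f, (chi V a).eval f = true → α.eval f = true := by
  intro f hf
  rw [eval_congr α (g := extA V a) fun n hn => (eval_chi V).mp hf n (hv hn)]
  exact ha

noncomputable def satList (β : BForm) : List (Atom V) :=
  (Finset.univ.filter fun a : Atom V => β.eval (extA V a) = true).toList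

lemma mem_satList {β : BForm} {a : Atom V} :
    a ∈ satList V β ↔ β.eval (extA V a) = true := by
  simp [satList]

noncomputable def satChis (β : BForm) : List BForm := (satList V β).map (chi V)

lemma imp_satChis {β : BForm} (hv : fvars β ⊆ V) :
    ∀ f, β.eval f = true → (bigOr (satChis V β)).eval f = true := by
  intro f hf
  rw [eval_bigOr]
  refine ⟨chi V (restrict V f), List.mem_map_of_mem ?_, ?_⟩
  · rw [mem_satList]
    rw [eval_congr β (g := f) fun n hn => extA_restrict V (hv hn)]
    exact hf
  · rw [eval_chi]
    intro n hn
    exact (extA_restrict V hn).symm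

lemma deg_shrink {Φ' : GradedImp} (h : Derives T Φ') :
    ∃ c' : NNReal, c' ∈ AddSubmonoid.closure (GradedImp.deg '' T) ∧ c' ≤ Φ'.deg ∧
      Derives T ⟨Φ'.lhs, c', Φ'.rhs⟩ := by
  induction h with
  | @ax Ψ hΨ => exact ⟨Ψ.deg, AddSubmonoid.subset_closure ⟨Ψ, hΨ, rfl⟩, le_rfl, Derives.ax hΨ⟩
  | r1 α β ht => exact ⟨0, zero_mem _, le_rfl, Derives.r1 α β ht⟩
  | r2 γ h ih => exact ⟨0, zero_mem _, le_rfl, Derives.r2 γ h⟩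
  | r3 d hcd h ih =>
      obtain ⟨c', hm, hle, hd⟩ := ih
      exact ⟨c', hm, hle.trans hcd, hd⟩
  | r4 h ih => exact ⟨0, zero_mem _, le_rfl, Derives.r4 h⟩
  | r5 h1 h2 ih1 ih2 =>
      obtain ⟨c1, m1, l1, d1⟩ := ih1
      obtain ⟨c2, m2, l2, d2⟩ := ih2
      refine ⟨max c1 c2, ?_, max_le l1 l2,
        Derives.r5 (Derives.r3 _ (le_max_left _ _) d1) (Derives.r3 _ (le_max_right _ _) d2)⟩
      rcases max_cases c1 c2 with ⟨hm, _⟩ | ⟨hm, _⟩ <;> rw [hm] <;> assumption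
  | r6 h1 h2 ih1 ih2 =>
      obtain ⟨c1, m1, l1, d1⟩ := ih1
      obtain ⟨c2, m2, l2, d2⟩ := ih2
      exact ⟨c1 + c2, add_mem m1 m2, add_le_add l1 l2, Derives.r6 d1 d2⟩

lemma exists_min_deg (hT : T.Finite) {χ δ : BForm}
    (hne : ∃ c : NNReal, Derives T ⟨χ, c, δ⟩) :
    ∃ c : NNReal, Derives T ⟨χ, c, δ⟩ ∧ ∀ c' : NNReal, Derives T ⟨χ, c', δ⟩ → c ≤ c' := by
  have hPWO : Set.IsPWO
      ((AddSubmonoid.closure (GradedImp.deg '' T) : AddSubmonoid NNReal) : Set NNReal) :=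
    Set.IsPWO.addSubmonoid_closure (fun x _ => zero_le) ((hT.image _).isPWO)
  set D : Set NNReal :=
    {c | c ∈ AddSubmonoid.closure (GradedImp.deg '' T) ∧ Derives T ⟨χ, c, δ⟩} with hD
  have hWF : D.IsWF := (hPWO.isWF).mono (fun c hc => hc.1)
  obtain ⟨c0, hc0⟩ := hne
  obtain ⟨c1, hm1, hle1, hd1⟩ := deg_shrink hc0
  have hDne : D.Nonempty := ⟨c1, hm1, hd1⟩
  refine ⟨hWF.min hDne, (hWF.min_mem hDne).2, ?_⟩
  intro c' hc'
  obtain ⟨c'', hm'', hle'', hd''⟩ := deg_shrink hc'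
  exact (hWF.min_le hDne ⟨hm'', hd''⟩).trans hle''

noncomputable def gfun (T : Set GradedImp) (χ δ : BForm) : ℝ≥0∞ :=
  ⨅ (c : NNReal) (_ : Derives T ⟨χ, c, δ⟩), (c : ℝ≥0∞)

lemma gfun_le {χ δ : BForm} {c : NNReal} (hd : Derives T ⟨χ, c, δ⟩) :
    gfun T χ δ ≤ (c : ℝ≥0∞) :=
  iInf₂_le c hd

lemma derives_of_gfun_le (hT : T.Finite) {χ δ : BForm} {c : NNReal}
    (hle : gfun T χ δ ≤ (c : ℝ≥0∞)) : Derives T ⟨χ, c, δ⟩ := by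
  by_cases hne : ∃ c' : NNReal, Derives T ⟨χ, c', δ⟩
  · obtain ⟨m, hm, hmin⟩ := exists_min_deg hT hne
    have h1 : (m : ℝ≥0∞) ≤ gfun T χ δ :=
      le_iInf₂ fun c' hc' => by exact_mod_cast hmin c' hc'
    have : m ≤ c := by exact_mod_cast h1.trans hle
    exact Derives.r3 c this hm
  · exfalso
    have htop : gfun T χ δ = ⊤ := by
      refine le_antisymm le_top (le_iInf₂ fun c' hc' => (hne ⟨c', hc'⟩).elim)
    rw [htop] at hle
    simp at hle


variable (T : Set GradedImp) (V : Finset ℕ) (β₀ : BForm)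

/-- The worlds: consistent atoms. -/
def CAtom : Type := {a : Atom V // ¬ Derives T ⟨chi V a, 0, .bot⟩}

instance : Finite (CAtom T V) := by
  unfold CAtom
  infer_instance

open Classical in
noncomputable def qcan (ε : ℝ≥0∞) (u w : CAtom T V) : ℝ≥0∞ :=
  if u = w then 0 else max ε (gfun T (chi V u.1) β₀ - gfun T (chi V w.1) β₀)

noncomputable def Qcan (ε : ℝ≥0∞) (hε : 0 < ε) : Quasimetric (CAtom T V) where
  q := qcan T V β₀ ε
  eq_zero_iff := by
    intro u w
    by_cases huw : u = w
    · simp [qcan, huw]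
    · simp only [qcan, if_neg huw]
      constructor
      · intro h0
        exact absurd ((le_max_left _ _).trans h0.le) hε.not_ge
      · intro h'
        exact absurd h' huw
  triangle := by
    intro v w x
    by_cases hvw : v = w
    · subst hvw
      simp [qcan]
    · by_cases hwx : w = x
      · subst hwx
        simp [qcan]
      · by_cases hvx : v = x
        · simp [qcan, hvx]
        · simp only [qcan, if_neg hvw, if_neg hwx, if_neg hvx]
          refine max_le ((le_max_left _ _).trans le_self_add) ?_
          exact tsub_le_tsub_add_tsub.trans
            (add_le_add (le_max_right _ _) (le_max_right _ _))

noncomputable def Mcan (ε : ℝ≥0∞) (hε : 0 < ε) : LAEModel (CAtom T V) where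
  Q := Qcan T V β₀ ε hε
  carrier := Set.univ
  empty_mem := Set.mem_univ _
  univ_mem := Set.mem_univ _
  inter_mem := fun _ _ _ _ => Set.mem_univ _
  union_mem := fun _ _ _ _ => Set.mem_univ _
  compl_mem := fun _ _ => Set.mem_univ _
  nbhd_mem := fun _ _ _ => Set.mem_univ _

noncomputable def ecan (ε : ℝ≥0∞) (hε : 0 < ε) : Evaluation (Mcan T V β₀ ε hε) where
  v := fun γ => {u : CAtom T V | γ.eval (extA V u.1) = true}
  mem_carrier := fun _ => Set.mem_univ _
  map_and := by
    intro α β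
    ext u
    simp [BForm.eval]
  map_or := by
    intro α β
    ext u
    simp [BForm.eval]
  map_not := by
    intro α
    ext u
    simp [BForm.eval]
  map_bot := by
    ext u
    simp [BForm.eval]
  map_top := by
    ext u
    simp [BForm.eval]

lemma minSpace_Qcan (ε : ℝ≥0∞) (hε : 0 < ε) : (Qcan T V β₀ ε hε).IsMinSpace := by
  intro a B hB
  obtain ⟨b, hbB, hbmin⟩ :=
    Set.exists_min_image B (fun b => (Qcan T V β₀ ε hε).q a b) B.toFinite hB
  refine ⟨b, hbB, le_antisymm (iInf₂_le b hbB) (le_iInf₂ fun b' hb' => hbmin b' hb')⟩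

end LAECompleteness

open LAECompleteness in
theorem completeness_minSpace_countermodel (T : Set GradedImp) (hT : T.Finite)
    (Φ : GradedImp) (h : ¬ Derives T Φ) :
    ∃ (W : Type) (_ : Nonempty W) (M : LAEModel W) (e : Evaluation M),
      M.Q.IsMinSpace ∧ (∀ Ψ ∈ T, Satisfies e Ψ) ∧ ¬ Satisfies e Φ := by
  classical
  obtain ⟨α₀, d₀, β₀⟩ := Φ
  -- the relevant finite set of variables
  set V : Finset ℕ :=
    (fvars α₀ ∪ fvars β₀) ∪ hT.toFinset.sup (fun Ψ => fvars Ψ.lhs ∪ fvars Ψ.rhs) with hV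
  have hvα₀ : fvars α₀ ⊆ V := fun x hx =>
    Finset.mem_union_left _ (Finset.mem_union_left _ hx)
  have hvβ₀ : fvars β₀ ⊆ V := fun x hx =>
    Finset.mem_union_left _ (Finset.mem_union_right _ hx)
  have hvT : ∀ Ψ ∈ T, fvars Ψ.lhs ⊆ V ∧ fvars Ψ.rhs ⊆ V := by
    intro Ψ hΨ
    have hs : fvars Ψ.lhs ∪ fvars Ψ.rhs ⊆
        hT.toFinset.sup (fun Ψ => fvars Ψ.lhs ∪ fvars Ψ.rhs) :=
      Finset.le_sup (f := fun Ψ => fvars Ψ.lhs ∪ fvars Ψ.rhs) (hT.mem_toFinset.mpr hΨ)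
    constructor <;> intro x hx
    · exact Finset.mem_union_right _ (hs (Finset.mem_union_left _ hx))
    · exact Finset.mem_union_right _ (hs (Finset.mem_union_right _ hx))
  -- a witness atom where the conclusion fails
  have hu₀ex : ∃ a : Atom V, α₀.eval (extA V a) = true ∧ ¬ Derives T ⟨chi V a, d₀, β₀⟩ := by
    by_contra hcon
    push_neg at hcon
    apply h
    refine chain0l (dtaut 0 (imp_satChis V hvα₀)) (derives_bigOr _ ?_)
    intro φ hφ
    obtain ⟨a, ha, rfl⟩ := List.mem_map.mp hφ
    exact hcon a ((mem_satList V).mp ha)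
  obtain ⟨u₀, hu₀α, hu₀d⟩ := hu₀ex
  have hu₀cons : ¬ Derives T ⟨chi V u₀, 0, BForm.bot⟩ := by
    intro hb
    exact hu₀d (Derives.r3 d₀ zero_le
      (chain0r hb (dtaut 0 (by intro f hf; simp [BForm.eval] at hf))))
  -- the positive lower bound ε
  set Fd : Finset NNReal := (hT.toFinset.image GradedImp.deg).filter (fun d => 0 < d) with hFd
  set ε : ℝ≥0∞ := if hF : Fd.Nonempty then ((Fd.min' hF : NNReal) : ℝ≥0∞) else 1 with hε
  have hε0 : 0 < ε := by
    rw [hε]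
    split
    · next hF =>
      have h1 : 0 < Fd.min' hF := (Finset.mem_filter.mp (Fd.min'_mem hF)).2
      exact_mod_cast h1
    · exact one_pos
  have hεle : ∀ Ψ ∈ T, 0 < Ψ.deg → ε ≤ (Ψ.deg : ℝ≥0∞) := by
    intro Ψ hΨ hd
    have hmem : Ψ.deg ∈ Fd := by
      rw [hFd]
      exact Finset.mem_filter.mpr
        ⟨Finset.mem_image_of_mem _ (hT.mem_toFinset.mpr hΨ), hd⟩
    rw [hε, dif_pos ⟨_, hmem⟩]
    exact_mod_cast Fd.min'_le _ hmem
  refine ⟨CAtom T V, ⟨⟨u₀, hu₀cons⟩⟩, Mcan T V β₀ ε hε0, ecan T V β₀ ε hε0,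
    minSpace_Qcan T V β₀ ε hε0, ?_, ?_⟩
  -- the model satisfies T
  · intro Ψ hΨT
    obtain ⟨α, d, β⟩ := Ψ
    intro u hu
    have huα : α.eval (extA V u.1) = true := hu
    show (Qcan T V β₀ ε hε0).distSet u ((ecan T V β₀ ε hε0).v β) ≤ (d : ℝ≥0∞)
    rcases eq_or_ne d 0 with rfl | hd0
    · -- degree-0 axiom: u itself satisfies β
      have hudβ : Derives T ⟨chi V u.1, 0, β⟩ :=
        chain0l (dtaut 0 (chi_imp V (hvT _ hΨT).1 huα)) (Derives.ax hΨT)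
      have huβ : β.eval (extA V u.1) = true := by
        by_contra hfalse
        have hb : β.eval (extA V u.1) = false := by
          revert hfalse; cases β.eval (extA V u.1) <;> simp
        have h2 : Derives T ⟨chi V u.1, 0, β.not⟩ :=
          dtaut 0 (chi_imp V (hvT _ hΨT).2 (by simp [BForm.eval, hb]))
        exact u.2 (derives_and_not_bot hudβ h2)
      refine le_trans (iInf₂_le u huβ) ?_
      simp [Qcan, qcan]
    · have hdpos : 0 < d := lt_of_le_of_ne zero_le (Ne.symm hd0)
      -- the target set is nonempty
      have hne : ∃ w : CAtom T V, β.eval (extA V w.1) = true := by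
        by_contra hemp
        push_neg at hemp
        have hbot : Derives T ⟨bigOr (satChis V β), 0, BForm.bot⟩ := by
          refine derives_bigOr _ ?_
          intro φ hφ
          obtain ⟨a, ha, rfl⟩ := List.mem_map.mp hφ
          by_cases hbad : Derives T ⟨chi V a, 0, BForm.bot⟩
          · exact hbad
          · exact absurd ((mem_satList V).mp ha) (by simpa using hemp ⟨a, hbad⟩)
        have hbad : Derives T ⟨chi V u.1, d, BForm.bot⟩ :=
          chain0l (dtaut 0 (chi_imp V (hvT _ hΨT).1 huα))
            (chain0r (chain0r (Derives.ax hΨT) (dtaut 0 (imp_satChis V (hvT _ hΨT).2))) hbot)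
        exact u.2 (Derives.r4 hbad)
      obtain ⟨wex, hwex⟩ := hne
      obtain ⟨wm, hwm, hmax⟩ := Set.exists_max_image
        {w : CAtom T V | β.eval (extA V w.1) = true}
        (fun w => gfun T (chi V w.1) β₀) (Set.toFinite _) ⟨wex, hwex⟩
      have hq : qcan T V β₀ ε u wm ≤ (d : ℝ≥0∞) := by
        by_cases huw : u = wm
        · simp [qcan, huw]
        · rw [qcan, if_neg huw]
          refine max_le (hεle _ hΨT hdpos) ?_
          rw [tsub_le_iff_right]
          by_cases htop : gfun T (chi V wm.1) β₀ = ⊤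
          · simp [htop]
          · set cm : NNReal := (gfun T (chi V wm.1) β₀).toNNReal with hcm
            have hcmeq : (cm : ℝ≥0∞) = gfun T (chi V wm.1) β₀ := ENNReal.coe_toNNReal htop
            have hder : Derives T ⟨chi V u.1, d + cm, β₀⟩ := by
              refine chain0l (dtaut 0 (chi_imp V (hvT _ hΨT).1 huα)) ?_
              refine Derives.r6 (Derives.ax hΨT) ?_
              refine chain0l (dtaut 0 (imp_satChis V (hvT _ hΨT).2)) ?_
              refine derives_bigOr _ ?_
              intro φ hφ
              obtain ⟨a, ha, rfl⟩ := List.mem_map.mp hφ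
              by_cases hbad : Derives T ⟨chi V a, 0, BForm.bot⟩
              · exact Derives.r3 _ zero_le
                  (chain0r hbad (dtaut 0 (by intro f hf; simp [BForm.eval] at hf)))
              · refine derives_of_gfun_le hT ?_
                rw [hcmeq]
                exact hmax ⟨a, hbad⟩ ((mem_satList V).mp ha)
            calc gfun T (chi V u.1) β₀ ≤ ((d + cm : NNReal) : ℝ≥0∞) := gfun_le hder
              _ = (d : ℝ≥0∞) + (cm : ℝ≥0∞) := by push_cast; rfl
              _ = (d : ℝ≥0∞) + gfun T (chi V wm.1) β₀ := by rw [hcmeq]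
      exact le_trans (iInf₂_le wm hwm) hq
  -- the model does not satisfy Φ
  · intro hs
    have humem : (⟨u₀, hu₀cons⟩ : CAtom T V) ∈ (ecan T V β₀ ε hε0).v α₀ := hu₀α
    have hle := hs humem
    have hgu₀ : (d₀ : ℝ≥0∞) < gfun T (chi V u₀) β₀ := by
      by_contra hle'
      push_neg at hle'
      exact hu₀d (derives_of_gfun_le hT hle')
    have hK : ∀ w ∈ {w : CAtom T V | β₀.eval (extA V w.1) = true},
        gfun T (chi V u₀) β₀ ≤ qcan T V β₀ ε ⟨u₀, hu₀cons⟩ w := by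
      intro w hw
      have hw0 : gfun T (chi V w.1) β₀ = 0 :=
        le_antisymm (by simpa using gfun_le (dtaut 0 (chi_imp V hvβ₀ hw))) zero_le
      by_cases huw : (⟨u₀, hu₀cons⟩ : CAtom T V) = w
      · exfalso
        rw [← huw] at hw
        exact hu₀d (dtaut d₀ (chi_imp V hvβ₀ hw))
      · unfold qcan; split_ifs with h'; exact absurd h' huw; rw [hw0, tsub_zero]
        exact le_max_right _ _
    have h1 : gfun T (chi V u₀) β₀ ≤
        (Qcan T V β₀ ε hε0).distSet ⟨u₀, hu₀cons⟩ ((ecan T V β₀ ε hε0).v β₀) :=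
      le_iInf₂ fun w hw => hK w hw
    exact absurd (h1.trans hle) (not_le.mpr hgu₀)
end
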